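/- The set of points X with d_pc(O,X) = r lying on the line y = x + r is exactly {(x, x+r) : -r ≤ x ≤ r(r-1)/2}, and the set lying on the line y = x - r is exactly {(x, x-r) : 0 ≤ x ≤ r(r+1)/2}. -/

import Mathlib

def Lp : ℤ × ℤ → ℤ × ℤ := fun p => (-p.1 + 2*p.2 + 1, p.2)
def Lpp : ℤ × ℤ → ℤ × ℤ := fun p => (p.1, 2*p.1 - p.2 + 1)
def Mr : ℤ × ℤ → ℤ × ℤ := fun p => (p.1 + 1, p.2)
def Ml : ℤ × ℤ → ℤ × ℤ := fun p => (p.1 - 1, p.2)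
def Mu : ℤ × ℤ → ℤ × ℤ := fun p => (p.1, p.2 + 1)
def Md : ℤ × ℤ → ℤ × ℤ := fun p => (p.1, p.2 - 1)

def ops : Set ((ℤ × ℤ) → (ℤ × ℤ)) := {Lp, Lpp, Mr, Ml, Mu, Md}

/-- The parabolic-taxicab distance: minimal number of operators from `ops`
needed to map `P` to `Q`. -/
noncomputable def dpc (P Q : ℤ × ℤ) : ℕ :=
  sInf {n | ∃ l : List ((ℤ × ℤ) → (ℤ × ℤ)), l.length = n ∧ (∀ f ∈ l, f ∈ ops) ∧
    l.foldr (fun f p => f p) P = Q}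


def Reach (n : ℕ) (p : ℤ × ℤ) : Prop :=
  ∃ l : List ((ℤ × ℤ) → (ℤ × ℤ)), l.length = n ∧ (∀ f ∈ l, f ∈ ops) ∧
    l.foldr (fun f q => f q) (0, 0) = p

lemma reach_zero : Reach 0 (0, 0) := ⟨[], rfl, by simp, rfl⟩

lemma reach_step {n : ℕ} {p : ℤ × ℤ} (f : (ℤ × ℤ) → (ℤ × ℤ)) (hf : f ∈ ops)
    (h : Reach n p) : Reach (n + 1) (f p) := by
  obtain ⟨l, hl, hops, hfold⟩ := h
  refine ⟨f :: l, by simp [hl], ?_, by rw [List.foldr_cons, hfold]⟩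
  intro g hg
  rcases List.mem_cons.mp hg with h | h
  · exact h ▸ hf
  · exact hops g h

/-- Combined lower-bound invariant. -/
lemma reach_bound : ∀ (n : ℕ) (p : ℤ × ℤ), Reach n p →
    (p.2 - p.1).natAbs ≤ n ∧
    ((p.2 - p.1).natAbs = n →
      (0 ≤ p.2 - p.1 → -(p.2 - p.1) ≤ p.1) ∧ (p.2 - p.1 < 0 → 0 ≤ p.1) ∧
      2 * p.1 ≤ (p.2 - p.1)^2 - (p.2 - p.1)) := by
  intro n
  induction n with
  | zero =>
    rintro p ⟨l, hl, -, hfold⟩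
    rw [List.length_eq_zero_iff] at hl
    subst hl
    simp at hfold
    subst hfold
    simp
  | succ n ih =>
    rintro p ⟨l, hl, hops, hfold⟩
    match l, hl with
    | f :: l', hl =>
      simp at hl
      set q := l'.foldr (fun f q => f q) (0, 0) with hq
      have hreach : Reach n q := ⟨l', hl, fun g hg => hops g (List.mem_cons_of_mem _ hg), rfl⟩
      have IH := ih q hreach
      have hp : p = f q := by rw [← hfold]; rfl
      have hf : f ∈ ops := hops f (List.mem_cons_self)
      obtain ⟨x, y⟩ := q
      simp only [Set.mem_insert_iff, Set.mem_singleton_iff, ops] at hf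
      have habs := IH.1
      rcases hf with hf | hf | hf | hf | hf | hf <;>
        subst hf <;> simp only [hp, Lp, Lpp, Mr, Ml, Mu, Md] <;>
        simp only at habs IH ⊢ <;>
        constructor
      · omega
      · -- Lp
        intro htight
        have hd : (y - x).natAbs = n := by omega
        have h0 : 0 ≤ y - x := by omega
        obtain ⟨h1, h2, h3⟩ := IH.2 hd
        have h1 := h1 h0
        refine ⟨by intro h; omega, by intro h; omega, by nlinarith⟩
      · omega
      · -- Lpp
        intro htight
        have hd : (y - x).natAbs = n := by omega
        have h0 : y - x ≤ 0 := by omega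
        obtain ⟨h1, h2, h3⟩ := IH.2 hd
        have h2' : 0 ≤ x := by
          rcases lt_or_eq_of_le h0 with h | h
          · exact h2 h
          · have := h1 (by omega); omega
        refine ⟨by intro h; omega, by intro h; omega, by nlinarith⟩
      · omega
      · -- Mr
        intro htight
        have hd : (y - x).natAbs = n := by omega
        have h0 : y - x ≤ 0 := by omega
        obtain ⟨h1, h2, h3⟩ := IH.2 hd
        have h2' : 0 ≤ x := by
          rcases lt_or_eq_of_le h0 with h | h
          · exact h2 h
          · have := h1 (by omega); omega
        refine ⟨by intro h; omega, by intro h; omega, by nlinarith⟩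
      · omega
      · -- Ml
        intro htight
        have hd : (y - x).natAbs = n := by omega
        have h0 : 0 ≤ y - x := by omega
        obtain ⟨h1, h2, h3⟩ := IH.2 hd
        have h1 := h1 h0
        refine ⟨by intro h; omega, by intro h; omega, by nlinarith⟩
      · omega
      · -- Mu
        intro htight
        have hd : (y - x).natAbs = n := by omega
        have h0 : 0 ≤ y - x := by omega
        obtain ⟨h1, h2, h3⟩ := IH.2 hd
        have h1 := h1 h0
        refine ⟨by intro h; omega, by intro h; omega, by nlinarith⟩
      · omega
      · -- Md
        intro htight
        have hd : (y - x).natAbs = n := by omega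
        have h0 : y - x ≤ 0 := by omega
        obtain ⟨h1, h2, h3⟩ := IH.2 hd
        have h2' : 0 ≤ x := by
          rcases lt_or_eq_of_le h0 with h | h
          · exact h2 h
          · have := h1 (by omega); omega
        refine ⟨by intro h; omega, by intro h; omega, by nlinarith⟩

lemma reach_line : ∀ r : ℕ, ∀ x : ℤ,
    ((-(r : ℤ) ≤ x ∧ 2 * x ≤ (r : ℤ) * ((r : ℤ) - 1)) → Reach r (x, x + (r : ℤ))) ∧
    ((0 ≤ x ∧ 2 * x ≤ (r : ℤ) * ((r : ℤ) + 1)) → Reach r (x, x - (r : ℤ))) := by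
  intro r
  induction r with
  | zero =>
    intro x
    constructor
    · rintro ⟨h1, h2⟩
      have hx : x = 0 := by omega
      subst hx
      simpa using reach_zero
    · rintro ⟨h1, h2⟩
      have hx : x = 0 := by omega
      subst hx
      simpa using reach_zero
  | succ r ih =>
    intro x
    have hrn : (0 : ℤ) ≤ r := Int.ofNat_nonneg r
    have hcast : ((r + 1 : ℕ) : ℤ) = (r : ℤ) + 1 := by push_cast; ring
    have heven : ∃ m : ℤ, (r : ℤ) * ((r : ℤ) + 1) = 2 * m := by
      rcases Int.even_mul_succ_self (r : ℤ) with ⟨m, hm⟩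
      exact ⟨m, by linarith⟩
    constructor
    · rintro ⟨h1, h2⟩
      rw [hcast] at h1 h2 ⊢
      have h2' : 2 * x ≤ (r : ℤ) * ((r : ℤ) + 1) := by nlinarith
      rcases le_or_gt 0 x with hx | hx
      · -- use Lpp on (x, x - r)
        have hq : Reach r (x, x - (r : ℤ)) := (ih x).2 ⟨hx, h2'⟩
        have := reach_step Lpp (by simp [ops]) hq
        have he : Lpp (x, x - (r : ℤ)) = (x, x + ((r : ℤ) + 1)) := by
          simp [Lpp]; ring
        rwa [he] at this
      · -- use Ml on (x+1, x+1+r)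
        have hnn : (0 : ℤ) ≤ (r : ℤ) * ((r : ℤ) - 1) := by
          rcases le_or_gt 1 (r : ℤ) with h | h
          · exact mul_nonneg hrn (by linarith)
          · have : (r : ℤ) = 0 := by omega
            simp [this]
        have hq : Reach r (x + 1, (x + 1) + (r : ℤ)) := (ih (x + 1)).1 ⟨by omega, by omega⟩
        have := reach_step Ml (by simp [ops]) hq
        have he : Ml (x + 1, (x + 1) + (r : ℤ)) = (x, x + ((r : ℤ) + 1)) := by
          simp [Ml]; ring
        rwa [he] at this
    · rintro ⟨h1, h2⟩
      rw [hcast] at h2 ⊢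
      rcases le_or_gt (2 * x) ((r : ℤ) * ((r : ℤ) + 1)) with hx | hx
      · -- use Md on (x, x - r)
        have hq : Reach r (x, x - (r : ℤ)) := (ih x).2 ⟨h1, hx⟩
        have := reach_step Md (by simp [ops]) hq
        have he : Md (x, x - (r : ℤ)) = (x, x - ((r : ℤ) + 1)) := by
          simp [Md]; ring
        rwa [he] at this
      · -- use Lp on (x - 2r - 1, (x - 2r - 1) + r)
        obtain ⟨m, hm⟩ := heven
        have hnn : (0 : ℤ) ≤ (r : ℤ) * ((r : ℤ) - 1) := by
          rcases le_or_gt 1 (r : ℤ) with h | h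
          · exact mul_nonneg hrn (by linarith)
          · have : (r : ℤ) = 0 := by omega
            simp [this]
        have hrr : 2 * (r : ℤ) ≤ (r : ℤ) * ((r : ℤ) + 1) := by nlinarith
        have hxr : (r : ℤ) + 1 ≤ x := by omega
        have hub : 2 * (x - 2 * (r : ℤ) - 1) ≤ (r : ℤ) * ((r : ℤ) - 1) := by nlinarith
        have hq : Reach r (x - 2 * (r : ℤ) - 1, (x - 2 * (r : ℤ) - 1) + (r : ℤ)) :=
          (ih (x - 2 * (r : ℤ) - 1)).1 ⟨by omega, hub⟩
        have := reach_step Lp (by simp [ops]) hq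
        have he : Lp (x - 2 * (r : ℤ) - 1, (x - 2 * (r : ℤ) - 1) + (r : ℤ)) =
            (x, x - ((r : ℤ) + 1)) := by
          simp [Lp]; constructor <;> ring
        rwa [he] at this

lemma reach_exists : ∀ (k : ℕ) (p : ℤ × ℤ), p.1.natAbs + p.2.natAbs = k → ∃ n, Reach n p := by
  intro k
  induction k with
  | zero =>
    rintro ⟨x, y⟩ h
    simp only at h
    have hx : x = 0 := by omega
    have hy : y = 0 := by omega
    exact ⟨0, by rw [hx, hy]; exact reach_zero⟩
  | succ k ih =>
    rintro ⟨x, y⟩ h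
    simp only at h
    rcases lt_trichotomy x 0 with hx | hx | hx
    · obtain ⟨n, hn⟩ := ih (x + 1, y) (by simp only; omega)
      refine ⟨n + 1, ?_⟩
      have := reach_step Ml (by simp [ops]) hn
      have he : Ml (x + 1, y) = (x, y) := by simp [Ml]
      rwa [he] at this
    · rcases lt_trichotomy y 0 with hy | hy | hy
      · obtain ⟨n, hn⟩ := ih (x, y + 1) (by simp only; omega)
        refine ⟨n + 1, ?_⟩
        have := reach_step Md (by simp [ops]) hn
        have he : Md (x, y + 1) = (x, y) := by simp [Md]
        rwa [he] at this
      · omega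
      · obtain ⟨n, hn⟩ := ih (x, y - 1) (by simp only; omega)
        refine ⟨n + 1, ?_⟩
        have := reach_step Mu (by simp [ops]) hn
        have he : Mu (x, y - 1) = (x, y) := by simp [Mu]
        rwa [he] at this
    · obtain ⟨n, hn⟩ := ih (x - 1, y) (by simp only; omega)
      refine ⟨n + 1, ?_⟩
      have := reach_step Mr (by simp [ops]) hn
      have he : Mr (x - 1, y) = (x, y) := by simp [Mr]
      rwa [he] at this

theorem boundary_extreme_lines (r : ℕ) :
    ({X : ℤ × ℤ | dpc (0, 0) X = r ∧ X.2 = X.1 + (r : ℤ)} =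
      {X : ℤ × ℤ | ∃ x : ℤ, -(r : ℤ) ≤ x ∧ x ≤ (r : ℤ) * ((r : ℤ) - 1) / 2 ∧
        X = (x, x + (r : ℤ))}) ∧
    ({X : ℤ × ℤ | dpc (0, 0) X = r ∧ X.2 = X.1 - (r : ℤ)} =
      {X : ℤ × ℤ | ∃ x : ℤ, 0 ≤ x ∧ x ≤ (r : ℤ) * ((r : ℤ) + 1) / 2 ∧
        X = (x, x - (r : ℤ))}) := by
  have key : ∀ X : ℤ × ℤ, dpc (0, 0) X = sInf {n | Reach n X} := fun X => rfl
  have hrn : (0 : ℤ) ≤ (r : ℤ) := Int.ofNat_nonneg r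
  obtain ⟨m, hm⟩ : ∃ m : ℤ, (r : ℤ) * ((r : ℤ) - 1) = 2 * m := by
    rcases Int.even_mul_succ_self ((r : ℤ) - 1) with ⟨c, hc⟩
    exact ⟨c, by nlinarith⟩
  obtain ⟨m', hm'⟩ : ∃ m' : ℤ, (r : ℤ) * ((r : ℤ) + 1) = 2 * m' := by
    rcases Int.even_mul_succ_self (r : ℤ) with ⟨c, hc⟩
    exact ⟨c, by linarith⟩
  constructor
  · ext X
    simp only [Set.mem_setOf_eq]
    constructor
    · rintro ⟨hd, hy⟩
      obtain ⟨x, y⟩ := X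
      simp only at hy
      subst hy
      have hne : Set.Nonempty {n | Reach n (x, x + (r : ℤ))} := by
        obtain ⟨n, hn⟩ := reach_exists _ (x, x + (r : ℤ)) rfl
        exact ⟨n, hn⟩
      have hmem := Nat.sInf_mem hne
      rw [key] at hd
      rw [hd] at hmem
      have htight : ((x + (r : ℤ)) - x).natAbs = r := by omega
      obtain ⟨h1, h2, h3⟩ := (reach_bound r (x, x + (r : ℤ)) hmem).2 htight
      simp only at h1 h2 h3
      have h1' := h1 (by omega)
      refine ⟨x, by omega, ?_, rfl⟩
      have hsq : (x + (r : ℤ) - x)^2 - (x + (r : ℤ) - x) = 2 * m := by rw [← hm]; ring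
      rw [hm]
      omega
    · rintro ⟨x', h1, h2, rfl⟩
      refine ⟨?_, by simp⟩
      have h2' : 2 * x' ≤ (r : ℤ) * ((r : ℤ) - 1) := by rw [hm] at h2 ⊢; omega
      have hr : Reach r (x', x' + (r : ℤ)) := (reach_line r x').1 ⟨h1, h2'⟩
      rw [key]
      refine le_antisymm (Nat.sInf_le hr) (le_csInf ⟨r, hr⟩ ?_)
      intro n hn
      have := (reach_bound n _ hn).1
      simp only at this
      omega
  · ext X
    simp only [Set.mem_setOf_eq]
    constructor
    · rintro ⟨hd, hy⟩
      obtain ⟨x, y⟩ := X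
      simp only at hy
      subst hy
      have hne : Set.Nonempty {n | Reach n (x, x - (r : ℤ))} := by
        obtain ⟨n, hn⟩ := reach_exists _ (x, x - (r : ℤ)) rfl
        exact ⟨n, hn⟩
      have hmem := Nat.sInf_mem hne
      rw [key] at hd
      rw [hd] at hmem
      have htight : ((x - (r : ℤ)) - x).natAbs = r := by omega
      obtain ⟨h1, h2, h3⟩ := (reach_bound r (x, x - (r : ℤ)) hmem).2 htight
      simp only at h1 h2 h3
      have h1' : 0 ≤ x := by
        rcases Nat.eq_zero_or_pos r with h | h
        · have := h1 (by omega); omega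
        · exact h2 (by omega)
      refine ⟨x, h1', ?_, rfl⟩
      have hsq : (x - (r : ℤ) - x)^2 - (x - (r : ℤ) - x) = 2 * m' := by rw [← hm']; ring
      rw [hm']
      omega
    · rintro ⟨x', h1, h2, rfl⟩
      refine ⟨?_, by simp⟩
      have h2' : 2 * x' ≤ (r : ℤ) * ((r : ℤ) + 1) := by rw [hm'] at h2 ⊢; omega
      have hr : Reach r (x', x' - (r : ℤ)) := (reach_line r x').2 ⟨h1, h2'⟩
      rw [key]
      refine le_antisymm (Nat.sInf_le hr) (le_csInf ⟨r, hr⟩ ?_)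
      intro n hn
      have := (reach_bound n _ hn).1
      simp only at this
      omega
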